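/- Let D ⊆ ℂ × ℂ be a nonempty open connected set and let 𝓕 be a family of 𝕋-holomorphic functions on D. If 𝓕 is locally uniformly bounded on D, then 𝓕 is normal on D: every sequence in 𝓕 has a subsequence converging uniformly on every compact subset of D to some limit function. (Bicomplex Montel theorem.) -/

import Mathlib

open Metric Set Filter Topology BoundedContinuousFunction

/-- A function `f = (f₁, f₂) : D → ℂ × ℂ` is 𝕋-holomorphic (bicomplex holomorphic) on an open
set `D ⊆ ℂ × ℂ` if it is holomorphic on `D` as a map of two complex variables and its components
satisfy the complexified Cauchy–Riemann equations `∂f₁/∂z₁ = ∂f₂/∂z₂`, `∂f₂/∂z₁ = −∂f₁/∂z₂`. -/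
def THolo (f : ℂ × ℂ → ℂ × ℂ) (U : Set (ℂ × ℂ)) : Prop :=
  DifferentiableOn ℂ f U ∧
  ∀ z ∈ U,
    fderiv ℂ (fun w => (f w).1) z (1, 0) = fderiv ℂ (fun w => (f w).2) z (0, 1) ∧
    fderiv ℂ (fun w => (f w).2) z (1, 0) = -(fderiv ℂ (fun w => (f w).1) z (0, 1))

/-- A family `F : ι → α → β` of functions is normal on a set `U` if every sequence in the
family has a subsequence converging uniformly on every compact subset of `U` to some limit
function. -/
def NormalOn {α β ι : Type*} [TopologicalSpace α] [UniformSpace β]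
    (F : ι → α → β) (U : Set α) : Prop :=
  ∀ u : ℕ → ι, ∃ φ : ℕ → ℕ, StrictMono φ ∧ ∃ f : α → β,
    ∀ K : Set α, K ⊆ U → IsCompact K →
      TendstoUniformlyOn (fun n => F (u (φ n))) f Filter.atTop K


/-- Compact exhaustion sets for an open set `D`. -/
def exK (D : Set (ℂ × ℂ)) (m : ℕ) : Set (ℂ × ℂ) :=
  closedBall 0 m ∩ {z | ∀ w ∉ D, (1 : ℝ) / (m + 1) ≤ dist z w}

lemma exK_isCompact (D : Set (ℂ × ℂ)) (m : ℕ) : IsCompact (exK D m) := by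
  refine (isCompact_closedBall _ _).inter_right ?_
  have h : {z : ℂ × ℂ | ∀ w ∉ D, (1 : ℝ) / (m + 1) ≤ dist z w} =
      ⋂ w ∈ Dᶜ, {z : ℂ × ℂ | (1 : ℝ) / (m + 1) ≤ dist z w} := by
    ext z; simp [Set.mem_iInter]
  rw [h]
  exact isClosed_biInter fun w _ =>
    isClosed_le continuous_const (continuous_id.dist continuous_const)

instance (D : Set (ℂ × ℂ)) (m : ℕ) : CompactSpace ↥(exK D m) :=
  isCompact_iff_compactSpace.1 (exK_isCompact D m)

lemma exK_subset (D : Set (ℂ × ℂ)) (m : ℕ) : exK D m ⊆ D := by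
  intro z hz
  by_contra hzD
  have h := hz.2 z hzD
  simp only [dist_self] at h
  have h1 : (0 : ℝ) < 1 / (m + 1) := by positivity
  linarith

lemma exK_covers (D : Set (ℂ × ℂ)) (hD : IsOpen D) {K : Set (ℂ × ℂ)}
    (hKD : K ⊆ D) (hK : IsCompact K) : ∃ m, K ⊆ exK D m := by
  obtain ⟨δ, hδ, hth⟩ := hK.exists_thickening_subset_open hD hKD
  obtain ⟨R, hR⟩ := hK.isBounded.subset_closedBall 0
  obtain ⟨m, hm⟩ := exists_nat_ge (max R (1 / δ))
  refine ⟨m, fun z hz => ⟨?_, ?_⟩⟩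
  · exact closedBall_subset_closedBall (le_trans (le_max_left _ _) hm) (hR hz)
  · intro w hw
    have hwth : w ∉ Metric.thickening δ K := fun h => hw (hth h)
    have hdist : δ ≤ dist z w := by
      by_contra h
      push_neg at h
      exact hwth (Metric.mem_thickening_iff.2 ⟨z, hz, by rwa [dist_comm]⟩)
    have h1δ : 1 / δ ≤ (m : ℝ) + 1 := le_trans (le_trans (le_max_right _ _) hm) (by linarith)
    have h2 : (1 : ℝ) / (m + 1) ≤ 1 / (1 / δ) :=
      one_div_le_one_div_of_le (by positivity) h1δ
    rw [one_div_one_div] at h2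
    linarith

/-- Schwarz-lemma based local Lipschitz estimate for bounded holomorphic maps. -/
lemma key_est {D : Set (ℂ × ℂ)} {f : ℂ × ℂ → ℂ × ℂ}
    (hf : DifferentiableOn ℂ f D) {x z w : ℂ × ℂ} {r M : ℝ} (hr : 0 < r)
    (hsub : closedBall x (2 * r) ⊆ D)
    (hM : ∀ v ∈ closedBall x (2 * r), ‖f v‖ ≤ M)
    (hz : z ∈ ball x (r / 2)) (hw : w ∈ ball x (r / 2)) :
    dist (f z) (f w) ≤ (2 * M + 2) / r * dist z w := by
  have hM0 : 0 ≤ M := le_trans (norm_nonneg _) (hM x (mem_closedBall_self (by linarith)))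
  rcases eq_or_ne z w with rfl | hne
  · simp
  have hzw : 0 < ‖z - w‖ := by rwa [norm_pos_iff, sub_ne_zero]
  set ρ : ℝ := r / ‖z - w‖ with hρdef
  have hdzw : dist z w < r := by
    calc dist z w ≤ dist z x + dist x w := dist_triangle _ _ _
      _ < r / 2 + r / 2 := add_lt_add (mem_ball.1 hz) (by rw [dist_comm]; exact mem_ball.1 hw)
      _ = r := by ring
  have hnzw : ‖z - w‖ = dist z w := (dist_eq_norm z w).symm
  have hρ1 : 1 < ρ := by
    rw [hρdef, lt_div_iff₀ hzw, one_mul, hnzw]; exact hdzw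
  set g : ℂ → ℂ × ℂ := fun t => f (w + t • (z - w)) with hgdef
  have hmaps : ∀ t : ℂ, t ∈ ball (0 : ℂ) ρ → w + t • (z - w) ∈ closedBall x (2 * r) := by
    intro t ht
    rw [mem_closedBall, dist_eq_norm]
    have hnt : ‖t‖ < ρ := by simpa [dist_eq_norm] using mem_ball.1 ht
    calc ‖w + t • (z - w) - x‖ = ‖w - x + t • (z - w)‖ := by rw [add_sub_right_comm]
      _ ≤ ‖w - x‖ + ‖t • (z - w)‖ := norm_add_le _ _
      _ = ‖w - x‖ + ‖t‖ * ‖z - w‖ := by rw [norm_smul]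
      _ ≤ r / 2 + ρ * ‖z - w‖ := by
          refine add_le_add (le_of_lt ?_) (mul_le_mul_of_nonneg_right hnt.le (norm_nonneg _))
          rw [← dist_eq_norm]; exact mem_ball.1 hw
      _ = r / 2 + r := by rw [hρdef, div_mul_cancel₀ _ (ne_of_gt hzw)]
      _ ≤ 2 * r := by linarith
  have hgd : DifferentiableOn ℂ g (ball (0 : ℂ) ρ) := by
    apply hf.comp
    · exact ((differentiable_const w).add
        (differentiable_id.smul_const (z - w))).differentiableOn
    · intro t ht
      exact hsub (hmaps t ht)
  have hg0 : g 0 = f w := by simp [hgdef]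
  have hg1 : g 1 = f z := by
    show f (w + (1 : ℂ) • (z - w)) = f z
    rw [one_smul]
    congr 1
    abel
  have hgmaps : MapsTo g (ball (0 : ℂ) ρ) (ball (g 0) (2 * M + 2)) := by
    intro t ht
    rw [mem_ball]
    have h1 : ‖g t‖ ≤ M := hM _ (hmaps t ht)
    have h2 : ‖g 0‖ ≤ M := by
      rw [hg0]
      refine hM w (mem_closedBall.2 ?_)
      have := mem_ball.1 hw
      linarith
    calc dist (g t) (g 0) ≤ ‖g t‖ + ‖g 0‖ := dist_le_norm_add_norm _ _
      _ ≤ M + M := add_le_add h1 h2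
      _ < 2 * M + 2 := by linarith
  have h1mem : (1 : ℂ) ∈ ball (0 : ℂ) ρ := by
    rw [mem_ball, dist_zero_right, norm_one]; exact hρ1
  have hkey := Complex.dist_le_div_mul_dist_of_mapsTo_ball hgd (hgmaps.mono_right ball_subset_closedBall) h1mem
  rw [hg0, hg1] at hkey
  have hd10 : dist (1 : ℂ) 0 = 1 := by simp
  rw [hd10, mul_one] at hkey
  calc dist (f z) (f w) ≤ (2 * M + 2) / ρ := hkey
    _ = (2 * M + 2) / r * dist z w := by
        rw [hρdef, div_div_eq_mul_div, hnzw]; ring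

/-- Arzelà–Ascoli applied on each exhaustion compact: the restrictions of a locally
uniformly bounded holomorphic family form a relatively compact set. -/
lemma closure_range_isCompact {ι : Type*} (D : Set (ℂ × ℂ)) (hD : IsOpen D)
    (F : ι → ℂ × ℂ → ℂ × ℂ) (hdiff : ∀ i, DifferentiableOn ℂ (F i) D)
    (hbd : ∀ K : Set (ℂ × ℂ), K ⊆ D → IsCompact K →
      ∃ M : ℝ, ∀ i : ι, ∀ z ∈ K, ‖F i z‖ ≤ M) (m : ℕ)
    (resto : ι → ↥(exK D m) →ᵇ (ℂ × ℂ))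
    (hresto : ∀ i (x : ↥(exK D m)), resto i x = F i x) :
    IsCompact (closure (Set.range resto)) := by
  obtain ⟨M, hM⟩ := hbd (exK D m) (exK_subset D m) (exK_isCompact D m)
  refine BoundedContinuousFunction.arzela_ascoli (closedBall 0 M) (isCompact_closedBall _ _)
    (Set.range resto) ?_ ?_
  · intro f x hf
    obtain ⟨i, rfl⟩ := hf
    rw [mem_closedBall_zero_iff, hresto]
    exact hM i x x.2
  · -- equicontinuity
    intro x₀
    rw [Metric.equicontinuousAt_iff]
    intro ε hε
    obtain ⟨ε₀, hε₀, hball⟩ := Metric.isOpen_iff.1 hD x₀ (exK_subset D m x₀.2)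
    set r : ℝ := ε₀ / 4 with hrdef
    have hr : 0 < r := by positivity
    have hsub : closedBall (x₀ : ℂ × ℂ) (2 * r) ⊆ D := by
      refine Subset.trans (closedBall_subset_ball ?_) hball
      rw [hrdef]; linarith
    obtain ⟨M', hM'⟩ := hbd _ hsub (isCompact_closedBall _ _)
    set Mb : ℝ := max M' 0 with hMbdef
    have hMb : ∀ i, ∀ v ∈ closedBall (x₀ : ℂ × ℂ) (2 * r), ‖F i v‖ ≤ Mb :=
      fun i v hv => (hM' i v hv).trans (le_max_left _ _)
    have hMb0 : (0 : ℝ) ≤ Mb := le_max_right _ _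
    set C : ℝ := (2 * Mb + 2) / r with hCdef
    have hC : 0 < C := by
      apply div_pos _ hr; linarith
    refine ⟨min (r / 2) (ε / (C + 1)), lt_min (by linarith) (by positivity), ?_⟩
    intro x hx i
    obtain ⟨j, hj⟩ := i.2
    have e1 : (i : ↥(exK D m) →ᵇ (ℂ × ℂ)) x = F j x := by rw [← hj, hresto]
    have e2 : (i : ↥(exK D m) →ᵇ (ℂ × ℂ)) x₀ = F j x₀ := by rw [← hj, hresto]
    rw [e1, e2, dist_comm]
    have hxd : dist (x : ℂ × ℂ) (x₀ : ℂ × ℂ) < min (r / 2) (ε / (C + 1)) := by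
      rwa [← Subtype.dist_eq]
    have hxball : (x : ℂ × ℂ) ∈ ball (x₀ : ℂ × ℂ) (r / 2) :=
      mem_ball.2 (lt_of_lt_of_le hxd (min_le_left _ _))
    have hx₀ball : (x₀ : ℂ × ℂ) ∈ ball (x₀ : ℂ × ℂ) (r / 2) := mem_ball_self (by linarith)
    have hfrac : C / (C + 1) < 1 := (div_lt_one (by linarith)).2 (by linarith)
    calc dist (F j x) (F j x₀) ≤ C * dist (x : ℂ × ℂ) (x₀ : ℂ × ℂ) :=
          key_est (hdiff j) hr hsub (hMb j) hxball hx₀ball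
      _ ≤ C * (ε / (C + 1)) :=
          mul_le_mul_of_nonneg_left (le_of_lt (lt_of_lt_of_le hxd (min_le_right _ _))) hC.le
      _ = ε * (C / (C + 1)) := by ring
      _ < ε * 1 := mul_lt_mul_of_pos_left hfrac hε
      _ = ε := mul_one ε

set_option synthInstance.maxHeartbeats 1000000 in
set_option maxHeartbeats 1000000 in
/-- **Bicomplex Montel theorem.** Every locally uniformly bounded family of bicomplex
holomorphic functions on a bicomplex domain `D` is normal on `D`. -/
theorem stmt8 {ι : Type*} (D : Set (ℂ × ℂ)) (hD : IsOpen D) (hconn : IsConnected D)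
    (F : ι → ℂ × ℂ → ℂ × ℂ) (hholo : ∀ i, THolo (F i) D)
    (hbd : ∀ K : Set (ℂ × ℂ), K ⊆ D → IsCompact K →
      ∃ M : ℝ, ∀ i : ι, ∀ z ∈ K, ‖F i z‖ ≤ M) :
    NormalOn F D := by
  intro u
  have hdiff : ∀ i, DifferentiableOn ℂ (F i) D := fun i => (hholo i).1
  have hcont : ∀ (i : ι) (m : ℕ), Continuous (fun x : ↥(exK D m) => F i x) := fun i m =>
    ((hdiff i).continuousOn.mono (exK_subset D m)).restrict
  set resto : ι → ∀ m : ℕ, ↥(exK D m) →ᵇ (ℂ × ℂ) := fun i m =>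
    BoundedContinuousFunction.mkOfCompact ⟨fun x => F i x, hcont i m⟩ with hrestodef
  set Cs : ∀ m : ℕ, Set (↥(exK D m) →ᵇ (ℂ × ℂ)) :=
    fun m => closure (Set.range (fun i => resto i m)) with hCsdef
  have hCs : ∀ m, IsCompact (Cs m) := fun m =>
    closure_range_isCompact D hD F hdiff hbd m (fun i => resto i m) (fun i x => rfl)
  have hmem : ∀ n, (fun m => resto (u n) m) ∈ Set.pi univ Cs :=
    fun n m _ => subset_closure (mem_range_self _)
  obtain ⟨L, hLmem, φ, hφ, htend⟩ := (isCompact_univ_pi hCs).tendsto_subseq hmem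
  refine ⟨φ, hφ, ?_⟩
  have hcoord : ∀ m, TendstoUniformly
      (fun n (x : ↥(exK D m)) => F (u (φ n)) x) (⇑(L m)) atTop := by
    intro m
    have h1 : Tendsto (fun n => resto (u (φ n)) m) atTop (𝓝 (L m)) :=
      tendsto_pi_nhds.1 htend m
    exact BoundedContinuousFunction.tendsto_iff_tendstoUniformly.1 h1
  set f : ℂ × ℂ → ℂ × ℂ := fun z => limUnder atTop (fun n => F (u (φ n)) z) with hfdef
  have hfL : ∀ m (x : ↥(exK D m)), f x = L m x := by
    intro m x
    exact ((hcoord m).tendsto_at x).limUnder_eq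
  refine ⟨f, ?_⟩
  intro K hKD hK
  obtain ⟨m, hKm⟩ := exK_covers D hD hKD hK
  have huniv : TendstoUniformlyOn (fun n => F (u (φ n))) f atTop (exK D m) := by
    rw [tendstoUniformlyOn_iff_tendstoUniformly_comp_coe]
    have hfc : (f ∘ (Subtype.val : ↥(exK D m) → ℂ × ℂ)) = ⇑(L m) := funext (hfL m)
    rw [hfc]
    exact hcoord m
  exact huniv.mono hKm
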